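/- (Composition law for K) For any Q₁, Q₂ in K, one has (Q₁ Q₂)(Q₁ Q₂)† = (Q₁ Q₁†)(Q₂ Q₂†), without any orthogonality assumption on the components. -/

import Mathlib

noncomputable section

/-- The algebra `K = ℍ ⊕ ℍε` of "dual" quaternions with `ε` central, `ε² = 1`,
modeled on pairs `(q_r, q_d)`. -/
def Kmul (x y : Quaternion ℝ × Quaternion ℝ) : Quaternion ℝ × Quaternion ℝ :=
  (x.1 * y.1 + x.2 * y.2, x.1 * y.2 + x.2 * y.1)

/-- Conjugation on `K`: quaternion conjugation on both components (`ε† = ε`). -/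
def Kconj (x : Quaternion ℝ × Quaternion ℝ) : Quaternion ℝ × Quaternion ℝ :=
  (star x.1, star x.2)

/-- Composition law for K: (Q₁Q₂)(Q₁Q₂)† = (Q₁Q₁†)(Q₂Q₂†), with no orthogonality
assumption. -/
theorem K_composition_law (Q1 Q2 : Quaternion ℝ × Quaternion ℝ) :
    Kmul (Kmul Q1 Q2) (Kconj (Kmul Q1 Q2)) =
      Kmul (Kmul Q1 (Kconj Q1)) (Kmul Q2 (Kconj Q2)) := by
  simp only [Kmul, Kconj, Prod.mk.injEq, Quaternion.ext_iff, Quaternion.re_mul,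
    Quaternion.imI_mul, Quaternion.imJ_mul, Quaternion.imK_mul, Quaternion.re_add,
    Quaternion.imI_add, Quaternion.imJ_add, Quaternion.imK_add, Quaternion.re_star,
    Quaternion.imI_star, Quaternion.imJ_star, Quaternion.imK_star]
  obtain ⟨⟨a1,a2,a3,a4⟩,⟨b1,b2,b3,b4⟩⟩ := Q1
  obtain ⟨⟨c1,c2,c3,c4⟩,⟨d1,d2,d3,d4⟩⟩ := Q2
  refine ⟨⟨?_,?_,?_,?_⟩,?_,?_,?_,?_⟩ <;> ring
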